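/- Let K ⊂ ℝⁿ be an open 0-symmetric convex body, a₁,…,aₙ linearly independent, λ₁ ≤ … ≤ λₙ > 0, and define the Siegel map f : K → ℝⁿ by f(x) = λ₁c₀(x) + (λ₂−λ₁)c₁(x) + … + (λₙ−λ_{n−1})c_{n−1}(x), where c_k(x) is the center of gravity of K ∩ (x + span{a₁,…,a_k}). Then f is injective and vol(f(K)) = λ₁·λ₂·…·λₙ·vol(K). -/

import Mathlib

open MeasureTheory Set Filter Pointwise

noncomputable section

/-- The lattice `B·ℤⁿ` generated by an invertible matrix `B`. -/
def latticeOf {n : ℕ} (B : Matrix (Fin n) (Fin n) ℝ) : Set (Fin n → ℝ) :=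
  {x | ∃ z : Fin n → ℤ, x = B.mulVec fun i => (z i : ℝ)}

/-- The periodic lattice `Λ(α,Q) = ⋃_{k=0}^{Q} (kα + Λ)`. -/
def periodicLattice {n : ℕ} (B : Matrix (Fin n) (Fin n) ℝ) (α : Fin n → ℝ) (Q : ℕ) :
    Set (Fin n → ℝ) :=
  {x | ∃ k : ℕ, k ≤ Q ∧ ∃ y ∈ latticeOf B, x = (k : ℝ) • α + y}

/-- The `i`-th successive minimum of a set `L` with respect to the body `K`. -/
def succMin {n : ℕ} (L K : Set (Fin n → ℝ)) (i : ℕ) : ℝ :=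
  sInf {l : ℝ | 0 ≤ l ∧ i ≤ Module.finrank ℝ (Submodule.span ℝ (L ∩ l • K))}

/-- The first successive minimum: smallest `l ≥ 0` with a nonzero point of `L` in `l • K`. -/
def firstMin {n : ℕ} (L K : Set (Fin n → ℝ)) : ℝ :=
  sInf {l : ℝ | 0 ≤ l ∧ ∃ x ∈ L, x ≠ 0 ∧ x ∈ l • K}

/-- The norm induced by a `0`-symmetric convex body `K`. -/
def normK {n : ℕ} (K : Set (Fin n → ℝ)) (x : Fin n → ℝ) : ℝ :=
  sInf {l : ℝ | 0 ≤ l ∧ x ∈ l • K}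

/-- The dual lattice of `latticeOf B`. -/
def dualLattice {n : ℕ} (B : Matrix (Fin n) (Fin n) ℝ) : Set (Fin n → ℝ) :=
  {u | ∀ y ∈ latticeOf B, ∃ z : ℤ, ∑ i, u i * y i = z}

/-- The density of a densest packing of translates of `K`: the supremum of upper
densities (computed with cubical windows) over all packings by translates of `K`. -/
def packingDensity {n : ℕ} (K : Set (Fin n → ℝ)) : ℝ :=
  sSup {d : ℝ | ∃ C : Set (Fin n → ℝ),
    (C.Pairwise fun c₁ c₂ =>
      Disjoint (interior ((c₁ + ·) '' K)) (interior ((c₂ + ·) '' K))) ∧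
    d = limsup (fun R : ℝ =>
      (volume ((⋃ c ∈ C, (c + ·) '' K) ∩ {x | ∀ i, |x i| ≤ R})).toReal /
        (volume {x : Fin n → ℝ | ∀ i, |x i| ≤ R}).toReal) atTop}

/-- The parameter set of the slice of `K` by the affine plane `x + span{a₀,…,a_{k-1}}`. -/
def sliceSet {n : ℕ} (K : Set (Fin n → ℝ)) (a : ℕ → (Fin n → ℝ)) (k : ℕ)
    (x : Fin n → ℝ) : Set (Fin k → ℝ) :=
  {t | (x + ∑ j : Fin k, t j • a (j : ℕ)) ∈ K}

/-- The center of gravity of the slice `K ∩ (x + span{a₀,…,a_{k-1}})`. -/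
def cog {n : ℕ} (K : Set (Fin n → ℝ)) (a : ℕ → (Fin n → ℝ)) (k : ℕ)
    (x : Fin n → ℝ) : Fin n → ℝ :=
  x + ∑ j : Fin k,
    ((∫ t in sliceSet K a k x, t j) / (volume (sliceSet K a k x)).toReal) • a (j : ℕ)

namespace Stmt19Aux

lemma tri_injective {n : ℕ} (c : Fin n → ℝ) (hc : ∀ i, c i ≠ 0)
    (g : Fin n → (Fin n → ℝ) → ℝ)
    (hdep : ∀ i (ξ ξ' : Fin n → ℝ), (∀ j, i < j → ξ j = ξ' j) → g i ξ = g i ξ') :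
    Function.Injective (fun ξ i => c i * ξ i + g i ξ) := by
  intro ξ ξ' h
  have h' : ∀ i : Fin n, c i * ξ i + g i ξ = c i * ξ' i + g i ξ' := fun i => congrFun h i
  have key : ∀ N : ℕ, ∀ i : Fin n, n - i.val ≤ N → ξ i = ξ' i := by
    intro N
    induction N with
    | zero => intro i hi; have := i.isLt; omega
    | succ N ih =>
      intro i hi
      have hgt : ∀ j : Fin n, i < j → ξ j = ξ' j := by
        intro j hj
        have hj' : i.val < j.val := hj
        exact ih j (by omega)
      have h1 := h' i
      have h2 := hdep i ξ ξ' hgt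
      have h3 : c i * ξ i = c i * ξ' i := by linarith
      exact mul_left_cancel₀ (hc i) h3
  funext i
  exact key n i (by omega)

lemma shear_measurePreserving : ∀ {n : ℕ} (g : Fin n → (Fin n → ℝ) → ℝ),
    (∀ i, Measurable (g i)) →
    (∀ i (ξ ξ' : Fin n → ℝ), (∀ j, i < j → ξ j = ξ' j) → g i ξ = g i ξ') →
    MeasurePreserving (fun ξ i => ξ i + g i ξ) volume volume := by
  intro n
  induction n with
  | zero =>
    intro g _ _
    have : (fun (ξ : Fin 0 → ℝ) (i : Fin 0) => ξ i + g i ξ) = id := by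
      funext ξ i; exact i.elim0
    rw [this]
    exact MeasurePreserving.id _
  | succ n ih =>
    intro g hmeas hdep
    have hcons : ∀ (i : Fin (n+1)) (ξ : Fin (n+1) → ℝ),
        g i (Fin.cons 0 (fun j => ξ j.succ)) = g i ξ := by
      intro i ξ
      apply hdep
      intro j hj
      have hj0 : j ≠ 0 := by
        intro h; subst h; exact absurd hj (by simp [Fin.lt_def])
      obtain ⟨j', rfl⟩ := Fin.exists_succ_eq.mpr hj0
      simp
    have hconsmeas : Measurable (fun y : Fin n → ℝ => (Fin.cons 0 y : Fin (n+1) → ℝ)) := by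
      apply measurable_pi_lambda
      intro j
      refine Fin.cases ?_ ?_ j
      · simp only [Fin.cons_zero]; exact measurable_const
      · intro j'; simpa using measurable_pi_apply j'
    set g' : Fin n → (Fin n → ℝ) → ℝ := fun i y => g i.succ (Fin.cons 0 y) with hg'
    have hg'meas : ∀ i, Measurable (g' i) := fun i => (hmeas i.succ).comp hconsmeas
    have hg'dep : ∀ i (y y' : Fin n → ℝ), (∀ j, i < j → y j = y' j) → g' i y = g' i y' := by
      intro i y y' hy
      apply hdep
      intro j hj
      have hj0 : j ≠ 0 := by
        intro h; subst h; exact absurd hj (by simp [Fin.lt_def])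
      obtain ⟨j', rfl⟩ := Fin.exists_succ_eq.mpr hj0
      have : i < j' := by
        rwa [Fin.succ_lt_succ_iff] at hj
      simp [hy j' this]
    have hS' := ih g' hg'meas hg'dep
    set h : (Fin n → ℝ) → ℝ := fun y => g 0 (Fin.cons 0 y) with hh
    have hhmeas : Measurable h := (hmeas 0).comp hconsmeas
    have hΨ : MeasurePreserving
        (fun p : (Fin n → ℝ) × ℝ => ((fun y (i : Fin n) => y i + g' i y) p.1, p.2 + h p.1))
        (volume.prod volume) (volume.prod volume) := by
      apply hS'.skew_product (g := fun y x => x + h y)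
      · exact measurable_snd.add (hhmeas.comp measurable_fst)
      · filter_upwards with y
        exact (measurePreserving_add_right volume (h y)).map_eq
    have hΦ : MeasurePreserving
        (fun p : ℝ × (Fin n → ℝ) => (p.1 + h p.2, fun i => p.2 i + g' i p.2))
        (volume.prod volume) (volume.prod volume) := by
      have hsw1 : MeasurePreserving (Prod.swap : ℝ × (Fin n → ℝ) → (Fin n → ℝ) × ℝ)
          (volume.prod volume) (volume.prod volume) := Measure.measurePreserving_swap
      have hsw2 : MeasurePreserving (Prod.swap : (Fin n → ℝ) × ℝ → ℝ × (Fin n → ℝ))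
          (volume.prod volume) (volume.prod volume) := Measure.measurePreserving_swap
      have := (hsw2.comp hΨ).comp hsw1
      convert this using 1
      rfl
    have hepres := volume_preserving_piFinSuccAbove (fun _ : Fin (n+1) => ℝ) 0
    set e := MeasurableEquiv.piFinSuccAbove (fun _ : Fin (n+1) => ℝ) 0 with he
    have key : (fun (ξ : Fin (n+1) → ℝ) (i : Fin (n+1)) => ξ i + g i ξ)
        = ⇑e.symm ∘ (fun p : ℝ × (Fin n → ℝ) => (p.1 + h p.2, fun i => p.2 i + g' i p.2)) ∘ ⇑e := by
      funext ξ
      have heξ : e ξ = (ξ 0, fun j : Fin n => ξ ((0 : Fin (n+1)).succAbove j)) := rfl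
      have hsa : ∀ j : Fin n, (0 : Fin (n+1)).succAbove j = j.succ := fun j => by
        simp [Fin.succAbove_zero]
      simp only [Function.comp_apply, heξ]
      have : ⇑e.symm = fun p : ℝ × (Fin n → ℝ) => Fin.insertNth 0 p.1 p.2 := rfl
      rw [this]
      simp only [hsa]
      rw [Fin.insertNth_zero]
      funext i
      refine Fin.cases ?_ ?_ i
      · show ξ 0 + g 0 ξ = ξ 0 + h fun j => ξ j.succ
        rw [hh]
        simp [hcons 0 ξ]
      · intro j
        show ξ j.succ + g j.succ ξ = ξ j.succ + g' j fun j' => ξ j'.succ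
        rw [hg']
        simp [hcons j.succ ξ]
    rw [key]
    exact (hepres.symm e).comp (hΦ.comp hepres)

lemma sliceSet_isOpen {n : ℕ} {K : Set (Fin n → ℝ)} (hKo : IsOpen K) (a : ℕ → (Fin n → ℝ))
    (k : ℕ) (x : Fin n → ℝ) : IsOpen (sliceSet K a k x) := by
  have hc : Continuous fun t : Fin k → ℝ => x + ∑ j : Fin k, t j • a (j : ℕ) :=
    continuous_const.add (continuous_finset_sum _ fun j _ =>
      (continuous_apply j).smul continuous_const)
  exact hKo.preimage hc

lemma sliceSet_isBounded {n : ℕ} {K : Set (Fin n → ℝ)} (hKb : Bornology.IsBounded K)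
    {a : ℕ → (Fin n → ℝ)} (hind : LinearIndependent ℝ fun i : Fin n => a (i : ℕ))
    {k : ℕ} (hk : k ≤ n) (x : Fin n → ℝ) : Bornology.IsBounded (sliceSet K a k x) := by
  classical
  set L := Fintype.linearCombination ℝ (fun j : Fin k => a (j : ℕ)) with hL
  have hLapp : ∀ t, L t = ∑ j : Fin k, t j • a (j : ℕ) := fun t =>
    Fintype.linearCombination_apply ℝ _ t
  have hlik : LinearIndependent ℝ fun j : Fin k => a (j : ℕ) := by
    have := hind.comp (Fin.castLE hk) (Fin.castLE_injective hk)
    exact this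
  have hLinj : Function.Injective L := by
    intro u v huv
    have h0 : L (u - v) = 0 := by rw [map_sub, huv, sub_self]
    have h1 : ∑ j : Fin k, (u - v) j • a (j : ℕ) = 0 := by rw [← hLapp]; exact h0
    have h2 := Fintype.linearIndependent_iff.mp hlik (fun j => (u - v) j) (by simpa using h1)
    funext i
    have := h2 i
    simpa [sub_eq_zero] using this
  obtain ⟨C, hC0, hC⟩ := L.exists_antilipschitzWith (LinearMap.ker_eq_bot.mpr hLinj)
  have hiso : Isometry fun y : Fin n → ℝ => x + y := isometry_add_left x
  have hcomp : AntilipschitzWith C fun t : Fin k → ℝ => x + L t := by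
    have := hiso.antilipschitz.comp hC
    simpa [Function.comp, AntilipschitzWith] using this
  have hsub : sliceSet K a k x ⊆ (fun t : Fin k → ℝ => x + L t) ⁻¹' K := by
    intro t ht
    simp only [mem_preimage, hLapp]
    exact ht
  exact (hcomp.isBounded_preimage hKb).subset hsub

lemma sliceSet_measurableSet {n : ℕ} {K : Set (Fin n → ℝ)} (hKo : IsOpen K)
    (a : ℕ → (Fin n → ℝ)) (k : ℕ) (x : Fin n → ℝ) : MeasurableSet (sliceSet K a k x) :=
  (sliceSet_isOpen hKo a k x).measurableSet

lemma slice_integrableOn {n : ℕ} {K : Set (Fin n → ℝ)} (hKo : IsOpen K)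
    (hKb : Bornology.IsBounded K)
    {a : ℕ → (Fin n → ℝ)} (hind : LinearIndependent ℝ fun i : Fin n => a (i : ℕ))
    {k : ℕ} (hk : k ≤ n) (x : Fin n → ℝ) (j : Fin k) :
    IntegrableOn (fun t : Fin k → ℝ => t j) (sliceSet K a k x) := by
  obtain ⟨R, hR⟩ := (sliceSet_isBounded hKb hind hk x).subset_closedBall 0
  have h1 : IntegrableOn (fun t : Fin k → ℝ => t j) (Metric.closedBall 0 R) :=
    (continuous_apply j).continuousOn.integrableOn_compact (isCompact_closedBall 0 R)
  exact h1.mono_set hR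

lemma cog_translate {n : ℕ} {K : Set (Fin n → ℝ)} (hKo : IsOpen K)
    (hKb : Bornology.IsBounded K)
    {a : ℕ → (Fin n → ℝ)} (hind : LinearIndependent ℝ fun i : Fin n => a (i : ℕ))
    {k : ℕ} (hk : k ≤ n) (x : Fin n → ℝ) (hne : (sliceSet K a k x).Nonempty)
    (s : Fin k → ℝ) :
    cog K a k (x + ∑ j : Fin k, s j • a (j : ℕ)) = cog K a k x := by
  classical
  set T := sliceSet K a k x with hT
  have hTmeas : MeasurableSet T := sliceSet_measurableSet hKo a k x
  have hTopen : IsOpen T := sliceSet_isOpen hKo a k x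
  have hTbdd : Bornology.IsBounded T := sliceSet_isBounded hKb hind hk x
  have hvolpos : 0 < volume T := hTopen.measure_pos volume hne
  have hvolfin : volume T < ⊤ := hTbdd.measure_lt_top
  have hvne : (volume T).toReal ≠ 0 :=
    ENNReal.toReal_ne_zero.mpr ⟨hvolpos.ne', hvolfin.ne⟩
  have hT' : sliceSet K a k (x + ∑ j : Fin k, s j • a (j : ℕ)) = (· + s) ⁻¹' T := by
    ext t
    have halg : x + ∑ j : Fin k, s j • a (j : ℕ) + ∑ j : Fin k, t j • a (j : ℕ)
        = x + ∑ j : Fin k, (t + s) j • a (j : ℕ) := by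
      rw [add_assoc]
      congr 1
      rw [← Finset.sum_add_distrib]
      refine Finset.sum_congr rfl fun j _ => ?_
      simp [add_smul, add_comm]
    show (x + ∑ j : Fin k, s j • a (j : ℕ) + ∑ j : Fin k, t j • a (j : ℕ)) ∈ K ↔
      (x + ∑ j : Fin k, (t + s) j • a (j : ℕ)) ∈ K
    rw [halg]
  have hvol' : volume (sliceSet K a k (x + ∑ j : Fin k, s j • a (j : ℕ))) = volume T := by
    rw [hT']
    exact measure_preimage_add_right volume s T
  have hint : ∀ j : Fin k, (∫ t in (· + s) ⁻¹' T, t j)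
      = (∫ t in T, t j) - (volume T).toReal * s j := by
    intro j
    have hmeas' : MeasurableSet ((· + s) ⁻¹' T) :=
      hTmeas.preimage (measurable_id.add_const s)
    have h1 : (∫ t in (· + s) ⁻¹' T, t j)
        = ∫ t, Set.indicator T (fun u => u j - s j) (t + s) := by
      rw [← integral_indicator hmeas']
      congr 1
      funext t
      by_cases h : t + s ∈ T
      · rw [Set.indicator_of_mem (by exact h : t ∈ (· + s) ⁻¹' T),
          Set.indicator_of_mem h]
        simp
      · rw [Set.indicator_of_notMem (by exact h : t ∉ (· + s) ⁻¹' T),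
          Set.indicator_of_notMem h]
    rw [h1, integral_add_right_eq_self (μ := volume) (Set.indicator T fun u => u j - s j) s,
      integral_indicator hTmeas]
    rw [integral_sub (slice_integrableOn hKo hKb hind hk x j)
      (integrableOn_const hvolfin.ne)]
    rw [setIntegral_const]
    simp [smul_eq_mul]
    rfl
  show (x + ∑ j : Fin k, s j • a (j : ℕ)) + _ = _
  rw [show (∑ j : Fin k,
      ((∫ t in sliceSet K a k (x + ∑ j : Fin k, s j • a (j : ℕ)), t j) /
        (volume (sliceSet K a k (x + ∑ j : Fin k, s j • a (j : ℕ)))).toReal) • a (j : ℕ))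
      = ∑ j : Fin k, ((∫ t in T, t j) / (volume T).toReal - s j) • a (j : ℕ) from ?_]
  · rw [show ∑ j : Fin k, ((∫ t in T, t j) / (volume T).toReal - s j) • a (j : ℕ)
        = (∑ j : Fin k, ((∫ t in T, t j) / (volume T).toReal) • a (j : ℕ))
          - ∑ j : Fin k, s j • a (j : ℕ) by
      rw [← Finset.sum_sub_distrib]
      exact Finset.sum_congr rfl fun j _ => by rw [sub_smul]]
    show _ = x + _
    abel
  · refine Finset.sum_congr rfl fun j _ => ?_
    rw [hvol', hT', hint j]
    congr 1
    field_simp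

lemma measurable_cog {n : ℕ} {K : Set (Fin n → ℝ)} (hKo : IsOpen K)
    (a : ℕ → (Fin n → ℝ)) (k : ℕ) : Measurable (cog K a k) := by
  classical
  set S : Set ((Fin n → ℝ) × (Fin k → ℝ)) :=
    {p | (p.1 + ∑ j : Fin k, p.2 j • a (j : ℕ)) ∈ K} with hSdef
  have hS : MeasurableSet S := by
    have hc : Continuous fun p : (Fin n → ℝ) × (Fin k → ℝ) =>
        p.1 + ∑ j : Fin k, p.2 j • a (j : ℕ) :=
      continuous_fst.add (continuous_finset_sum _ fun j _ =>
        ((continuous_apply j).comp continuous_snd).smul continuous_const)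
    exact hKo.measurableSet.preimage hc.measurable
  have hslice : ∀ x, sliceSet K a k x = Prod.mk x ⁻¹' S := fun x => rfl
  have hnum : ∀ j : Fin k, Measurable fun x => ∫ t in sliceSet K a k x, t j := by
    intro j
    have hFm : StronglyMeasurable (Set.indicator S fun p : (Fin n → ℝ) × (Fin k → ℝ) => p.2 j) :=
      (Measurable.indicator ((measurable_pi_apply j).comp measurable_snd) hS).stronglyMeasurable
    have h2 := hFm.integral_prod_right' (ν := volume)
    have h3 : ∀ x, (∫ t in sliceSet K a k x, t j)
        = ∫ t, Set.indicator S (fun p : (Fin n → ℝ) × (Fin k → ℝ) => p.2 j) (x, t) := by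
      intro x
      rw [← integral_indicator (by rw [hslice]; exact hS.preimage measurable_prodMk_left)]
      have heq : ∀ t, (sliceSet K a k x).indicator (fun t => t j) t
          = S.indicator (fun p => p.2 j) (x, t) := by
        intro t
        by_cases h : (x, t) ∈ S
        · rw [Set.indicator_of_mem (by exact h), Set.indicator_of_mem h]
        · rw [Set.indicator_of_notMem (by exact h), Set.indicator_of_notMem h]
      simp only [heq]
    simpa [← h3] using h2.measurable
  have hden : Measurable fun x => (volume (sliceSet K a k x)).toReal :=
    (measurable_measure_prodMk_left hS).ennreal_toReal
  have : Measurable fun x => ∑ j : Fin k,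
      ((∫ t in sliceSet K a k x, t j) / (volume (sliceSet K a k x)).toReal) • a (j : ℕ) := by
    apply Finset.measurable_sum
    intro j _
    exact ((hnum j).div hden).smul_const (a (j : ℕ))
  exact measurable_id.add this

lemma sum_smul_restrict {n k : ℕ} (hk : k ≤ n) (a : ℕ → Fin n → ℝ) (c : Fin n → ℝ)
    (hc : ∀ j : Fin n, k ≤ (j : ℕ) → c j = 0) :
    ∑ j : Fin n, c j • a (j : ℕ) = ∑ j : Fin k, c (Fin.castLE hk j) • a (j : ℕ) := by
  classical
  set F : ℕ → (Fin n → ℝ) := fun m => if h : m < n then c ⟨m, h⟩ • a m else 0 with hF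
  have h1 : ∑ j : Fin n, c j • a (j : ℕ) = ∑ m ∈ Finset.range n, F m := by
    rw [← Fin.sum_univ_eq_sum_range F n]
    refine Finset.sum_congr rfl fun j _ => ?_
    simp [hF, j.isLt]
  have h2 : ∑ j : Fin k, c (Fin.castLE hk j) • a (j : ℕ) = ∑ m ∈ Finset.range k, F m := by
    rw [← Fin.sum_univ_eq_sum_range F k]
    refine Finset.sum_congr rfl fun j _ => ?_
    have hj : (j : ℕ) < n := lt_of_lt_of_le j.isLt hk
    simp only [hF]
    rw [dif_pos hj]
    rfl
  have h3 : ∑ m ∈ Finset.range n, F m = ∑ m ∈ Finset.range k, F m := by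
    refine (Finset.sum_subset (Finset.range_subset_range.mpr hk) fun m hm hmk => ?_).symm
    simp only [hF]
    rcases lt_or_ge m n with h | h
    · rw [dif_pos h]
      have hkm : k ≤ m := by
        simp only [Finset.mem_range, not_lt] at hmk
        exact hmk
      rw [hc ⟨m, h⟩ hkm, zero_smul]
    · rw [dif_neg (not_lt.mpr h)]
  rw [h1, h3, h2]

end Stmt19Aux

open Stmt19Aux in
theorem stmt19 {n : ℕ} (K : Set (Fin n → ℝ)) (hKo : IsOpen K) (hKconv : Convex ℝ K)
    (hKb : Bornology.IsBounded K) (hKne : K.Nonempty) (hKsym : -K = K)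
    (a : ℕ → (Fin n → ℝ)) (hind : LinearIndependent ℝ fun i : Fin n => a (i : ℕ))
    (lam : ℕ → ℝ) (hlam0 : lam 0 = 0) (hlam1 : 0 < lam 1)
    (hmono : ∀ i : ℕ, 1 ≤ i → i < n → lam i ≤ lam (i + 1)) :
    Set.InjOn (fun x => ∑ k ∈ Finset.range n, (lam (k + 1) - lam k) • cog K a k x) K ∧
    (volume ((fun x => ∑ k ∈ Finset.range n, (lam (k + 1) - lam k) • cog K a k x) '' K)).toReal
      = (∏ k ∈ Finset.range n, lam (k + 1)) * (volume K).toReal := by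
  classical
  set f : (Fin n → ℝ) → (Fin n → ℝ) :=
    fun x => ∑ k ∈ Finset.range n, (lam (k + 1) - lam k) • cog K a k x with hfdef
  have hpos : ∀ k : ℕ, k < n → 0 < lam (k + 1) := by
    intro k
    induction k with
    | zero => intro _; exact hlam1
    | succ m ih => intro hm; exact lt_of_lt_of_le (ih (by omega)) (hmono (m + 1) (by omega) hm)
  -- the coordinate change A
  set Alin := Fintype.linearCombination ℝ (fun i : Fin n => a (i : ℕ)) with hAlin
  have hAlapp : ∀ ξ, Alin ξ = ∑ i : Fin n, ξ i • a (i : ℕ) := fun ξ =>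
    Fintype.linearCombination_apply ℝ _ ξ
  have hAinj : Function.Injective Alin := by
    intro u v huv
    have h0 : Alin (u - v) = 0 := by rw [map_sub, huv, sub_self]
    have h1 : ∑ j : Fin n, (u - v) j • a (j : ℕ) = 0 := by rw [← hAlapp]; exact h0
    have h2 := Fintype.linearIndependent_iff.mp hind (fun j => (u - v) j) (by simpa using h1)
    funext i
    have := h2 i
    simpa [sub_eq_zero] using this
  have hAsurj : Function.Surjective Alin :=
    (LinearMap.injective_iff_surjective_of_finrank_eq_finrank rfl).mp hAinj
  set A : (Fin n → ℝ) ≃ₗ[ℝ] (Fin n → ℝ) := LinearEquiv.ofBijective Alin ⟨hAinj, hAsurj⟩ with hA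
  have hAapp : ∀ ξ, A ξ = ∑ i : Fin n, ξ i • a (i : ℕ) := fun ξ => hAlapp ξ
  have hA_meas : Measurable ⇑A := A.toLinearMap.continuous_of_finiteDimensional.measurable
  have hAsymm_meas : Measurable ⇑A.symm :=
    A.symm.toLinearMap.continuous_of_finiteDimensional.measurable
  have hAsingle : ∀ i : Fin n, A.symm (a (i : ℕ)) = Pi.single i (1 : ℝ) := by
    intro i
    rw [LinearEquiv.symm_apply_eq, hAapp]
    have h1 : ∑ j : Fin n, (Pi.single i (1 : ℝ) : Fin n → ℝ) j • a (j : ℕ)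
        = (Pi.single i (1 : ℝ) : Fin n → ℝ) i • a ((i : Fin n) : ℕ) :=
      Finset.sum_eq_single_of_mem i (Finset.mem_univ i)
        (fun j _ hji => by
          rw [show (Pi.single i (1 : ℝ) : Fin n → ℝ) j = 0 from Pi.single_eq_of_ne hji 1,
            zero_smul])
    rw [h1, Pi.single_eq_same, one_smul]
  set K' : Set (Fin n → ℝ) := ⇑A ⁻¹' K with hK'def
  have hKK' : ⇑A '' K' = K := Set.image_preimage_eq K A.surjective
  -- measurability of f
  have hfmeas : Measurable f := by
    rw [hfdef]
    apply Finset.measurable_sum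
    intro k _
    exact (measurable_cog hKo a k).const_smul (lam (k + 1) - lam k)
  -- coordinates of cog under A.symm
  have hcog_symm : ∀ (k : ℕ) (hk : k ≤ n) (y : Fin n → ℝ) (i : Fin n),
      A.symm (cog K a k y) i = A.symm y i + ∑ j : Fin k,
        ((∫ t in sliceSet K a k y, t j) / (volume (sliceSet K a k y)).toReal)
          * (if i = Fin.castLE hk j then (1 : ℝ) else 0) := by
    intro k hk y i
    have hstep : A.symm (cog K a k y) = A.symm y + ∑ j : Fin k,
        ((∫ t in sliceSet K a k y, t j) / (volume (sliceSet K a k y)).toReal)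
          • (Pi.single (Fin.castLE hk j) (1 : ℝ) : Fin n → ℝ) := by
      simp only [cog, map_add, map_sum, _root_.map_smul]
      congr 1
      refine Finset.sum_congr rfl fun j _ => ?_
      congr 1
      have := hAsingle (Fin.castLE hk j)
      simpa using this
    rw [hstep]
    simp only [Pi.add_apply, Finset.sum_apply, Pi.smul_apply, smul_eq_mul]
    congr 1
    refine Finset.sum_congr rfl fun j _ => ?_
    congr 1
    rw [Pi.single_apply]
  have hfact1 : ∀ (k : ℕ) (hk : k ≤ n) (ξ : Fin n → ℝ) (i : Fin n), k ≤ (i : ℕ) →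
      A.symm (cog K a k (A ξ)) i = ξ i := by
    intro k hk ξ i hik
    rw [hcog_symm k hk (A ξ) i, LinearEquiv.symm_apply_apply]
    have hz : ∀ j : Fin k, ((∫ t in sliceSet K a k (A ξ), t j) /
        (volume (sliceSet K a k (A ξ))).toReal)
        * (if i = Fin.castLE hk j then (1 : ℝ) else 0) = 0 := by
      intro j
      rw [if_neg, mul_zero]
      intro hji
      have h1 : (i : ℕ) = (j : ℕ) := by rw [hji]; simp
      have := j.isLt
      omega
    rw [Finset.sum_eq_zero (fun j _ => hz j), add_zero]
  have hslice0 : ∀ (k : ℕ) (x : Fin n → ℝ), x ∈ K → (sliceSet K a k x).Nonempty := by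
    intro k x hx
    refine ⟨0, ?_⟩
    show (x + ∑ j : Fin k, (0 : ℝ) • a (j : ℕ)) ∈ K
    simpa using hx
  -- the auxiliary projection and shear functions
  set Q : Fin n → (Fin n → ℝ) → (Fin n → ℝ) := fun i ξ j => if i < j then ξ j else 0 with hQdef
  have hQmeas : ∀ i : Fin n, Measurable (Q i) := by
    intro i
    apply measurable_pi_lambda
    intro j
    by_cases h : i < j
    · simpa [hQdef, h] using measurable_pi_apply j
    · simpa [hQdef, h] using measurable_const
  set g : Fin n → (Fin n → ℝ) → ℝ := fun i ξ => ∑ k ∈ Finset.range n,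
      (if (i : ℕ) < k then (lam (k + 1) - lam k) * A.symm (cog K a k (A (Q i ξ))) i else 0)
    with hgdef
  have hgmeas : ∀ i, Measurable (g i) := by
    intro i
    rw [hgdef]
    apply Finset.measurable_sum
    intro k _
    by_cases hik : (i : ℕ) < k
    · simp only [if_pos hik]
      have : Measurable fun ξ => A.symm (cog K a k (A (Q i ξ))) i :=
        (measurable_pi_apply i).comp (hAsymm_meas.comp
          ((measurable_cog hKo a k).comp (hA_meas.comp (hQmeas i))))
      exact this.const_mul _
    · simp only [if_neg hik]
      exact measurable_const
  have hgdep : ∀ i (ξ ξ' : Fin n → ℝ), (∀ j, i < j → ξ j = ξ' j) → g i ξ = g i ξ' := by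
    intro i ξ ξ' hj
    have hQeq : Q i ξ = Q i ξ' := by
      funext j
      simp only [hQdef]
      by_cases h : i < j
      · simp [h, hj j h]
      · simp [h]
    simp only [hgdef, hQeq]
  -- translation invariance: cog at A (Q i ξ) equals cog at A ξ
  have hcogQ : ∀ (i : Fin n) (ξ : Fin n → ℝ), A ξ ∈ K → ∀ (k : ℕ) (hk : k ≤ n), (i : ℕ) < k →
      cog K a k (A (Q i ξ)) = cog K a k (A ξ) := by
    intro i ξ hξ k hk hik
    set s : Fin k → ℝ := fun j => (Q i ξ - ξ) (Fin.castLE hk j) with hs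
    have hzero : ∀ j : Fin n, k ≤ (j : ℕ) → (Q i ξ - ξ) j = 0 := by
      intro j hkj
      have hij : i < j := by
        rw [Fin.lt_def]
        omega
      simp [hQdef, hij]
    have hAQ : A (Q i ξ) = A ξ + ∑ j : Fin k, s j • a (j : ℕ) := by
      have h1 : A (Q i ξ) = A ξ + A (Q i ξ - ξ) := by
        rw [map_sub]; abel
      rw [h1]
      congr 1
      rw [hAapp (Q i ξ - ξ), sum_smul_restrict hk a (Q i ξ - ξ) hzero]
    rw [hAQ]
    exact cog_translate hKo hKb hind hk (A ξ) (hslice0 k (A ξ) hξ) s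
  -- the triangular map
  set T : (Fin n → ℝ) → (Fin n → ℝ) := fun ξ i => lam ((i : ℕ) + 1) * ξ i + g i ξ with hTdef
  have hlamne : ∀ i : Fin n, lam ((i : ℕ) + 1) ≠ 0 := fun i => (hpos i i.isLt).ne'
  have hTinj : Function.Injective T :=
    tri_injective (fun i : Fin n => lam ((i : ℕ) + 1)) hlamne g hgdep
  -- the main pointwise identity
  have hmain' : ∀ ξ, A ξ ∈ K → f (A ξ) = A (T ξ) := by
    intro ξ hξ
    rw [← LinearEquiv.symm_apply_eq]
    funext i
    have hL : A.symm (f (A ξ)) i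
        = ∑ k ∈ Finset.range n, (lam (k + 1) - lam k) * A.symm (cog K a k (A ξ)) i := by
      rw [hfdef]
      simp only [map_sum, _root_.map_smul, Finset.sum_apply, Pi.smul_apply, smul_eq_mul]
    rw [hL]
    have hsplit : ∀ k ∈ Finset.range n, (lam (k + 1) - lam k) * A.symm (cog K a k (A ξ)) i
        = (if (i : ℕ) < k then (lam (k + 1) - lam k) * A.symm (cog K a k (A (Q i ξ))) i else 0)
          + (if (i : ℕ) < k then 0 else (lam (k + 1) - lam k) * ξ i) := by
      intro k hkr
      have hk : k ≤ n := le_of_lt (Finset.mem_range.mp hkr)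
      by_cases hik : (i : ℕ) < k
      · rw [if_pos hik, if_pos hik, add_zero, hcogQ i ξ hξ k hk hik]
      · rw [if_neg hik, if_neg hik, zero_add, hfact1 k hk ξ i (le_of_not_gt hik)]
    rw [Finset.sum_congr rfl hsplit, Finset.sum_add_distrib]
    have hg2 : ∑ k ∈ Finset.range n, (if (i : ℕ) < k then (0 : ℝ) else (lam (k + 1) - lam k) * ξ i)
        = lam ((i : ℕ) + 1) * ξ i := by
      have hstep : ∀ k ∈ Finset.range n,
          (if (i : ℕ) < k then (0 : ℝ) else (lam (k + 1) - lam k) * ξ i)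
          = (if (i : ℕ) < k then 0 else lam (k + 1) - lam k) * ξ i := by
        intro k _
        split <;> simp
      rw [Finset.sum_congr rfl hstep, ← Finset.sum_mul]
      have hin : (i : ℕ) + 1 ≤ n := i.isLt
      have hz : ∀ k ∈ Finset.range n, k ∉ Finset.range ((i : ℕ) + 1) →
          (if (i : ℕ) < k then (0 : ℝ) else lam (k + 1) - lam k) = 0 := by
        intro k _ hk2
        simp only [Finset.mem_range, not_lt] at hk2
        rw [if_pos (by omega)]
      rw [← Finset.sum_subset (Finset.range_subset_range.mpr hin) hz]
      have hcg : ∀ k ∈ Finset.range ((i : ℕ) + 1),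
          (if (i : ℕ) < k then (0 : ℝ) else lam (k + 1) - lam k) = lam (k + 1) - lam k := by
        intro k hk2
        simp only [Finset.mem_range] at hk2
        rw [if_neg (by omega)]
      rw [Finset.sum_congr rfl hcg, Finset.sum_range_sub lam, hlam0, sub_zero]
    rw [hg2]
    show _ = T ξ i
    rw [hTdef]
    simp only [hgdef]
    ring
  -- injectivity
  have hinj : Set.InjOn f K := by
    intro x hx y hy hxy
    have hx' : A (A.symm x) ∈ K := by rw [LinearEquiv.apply_symm_apply]; exact hx
    have hy' : A (A.symm y) ∈ K := by rw [LinearEquiv.apply_symm_apply]; exact hy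
    have e1 : f (A (A.symm x)) = f (A (A.symm y)) := by
      rw [LinearEquiv.apply_symm_apply, LinearEquiv.apply_symm_apply]; exact hxy
    rw [hmain' _ hx', hmain' _ hy'] at e1
    have e2 := hTinj (A.injective e1)
    calc x = A (A.symm x) := (LinearEquiv.apply_symm_apply A x).symm
    _ = A (A.symm y) := by rw [e2]
    _ = y := LinearEquiv.apply_symm_apply A y
  refine ⟨hinj, ?_⟩
  -- the diagonal map and the shear
  set Dlin : (Fin n → ℝ) →ₗ[ℝ] (Fin n → ℝ) :=
    Matrix.toLin' (Matrix.diagonal fun i : Fin n => lam ((i : ℕ) + 1)) with hDlindef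
  have hDapp : ∀ ξ (i : Fin n), Dlin ξ i = lam ((i : ℕ) + 1) * ξ i := by
    intro ξ i
    rw [hDlindef]
    simp [Matrix.toLin'_apply, Matrix.mulVec_diagonal]
  set g2 : Fin n → (Fin n → ℝ) → ℝ :=
    fun i η => g i (fun j => η j / lam ((j : ℕ) + 1)) with hg2def
  have hg2meas : ∀ i, Measurable (g2 i) := by
    intro i
    rw [hg2def]
    exact (hgmeas i).comp (measurable_pi_lambda _ fun j => (measurable_pi_apply j).div_const _)
  have hg2dep : ∀ i (η η' : Fin n → ℝ), (∀ j, i < j → η j = η' j) → g2 i η = g2 i η' := by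
    intro i η η' hj
    simp only [hg2def]
    apply hgdep
    intro j hij
    rw [hj j hij]
  set S : (Fin n → ℝ) → (Fin n → ℝ) := fun η i => η i + g2 i η with hSdef
  have hSmp : MeasurePreserving S volume volume := shear_measurePreserving g2 hg2meas hg2dep
  have hSinj : Function.Injective S := by
    have hrw : S = fun η i => (1 : ℝ) * η i + g2 i η := by
      funext η i; rw [hSdef]; simp
    rw [hrw]
    exact tri_injective (fun _ => (1 : ℝ)) (fun _ => one_ne_zero) g2 hg2dep
  have hTSD : ∀ ξ, T ξ = S (Dlin ξ) := by
    intro ξ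
    funext i
    rw [hTdef, hSdef]
    simp only
    rw [hDapp]
    congr 2
    · funext j
      rw [hDapp]
      exact (mul_div_cancel_left₀ (ξ j) (hlamne j)).symm
  -- the image identity
  have hfK : f '' K = ⇑A '' (S '' (⇑Dlin '' K')) := by
    rw [← hKK', ← Set.image_comp]
    have h1 : ∀ ξ ∈ K', (f ∘ ⇑A) ξ = (⇑A ∘ S ∘ ⇑Dlin) ξ := by
      intro ξ hξ
      show f (A ξ) = A (S (Dlin ξ))
      rw [hmain' ξ hξ, hTSD]
    rw [Set.image_congr h1, Set.image_comp, Set.image_comp]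
  -- measurability of the image
  have hfKmeas : MeasurableSet (f '' K) :=
    MeasurableSet.image_of_measurable_injOn hKo.measurableSet hfmeas hinj
  have hSDK : S '' (⇑Dlin '' K') = ⇑A ⁻¹' (f '' K) := by
    rw [hfK, Set.preimage_image_eq _ A.injective]
  have hSDKmeas : MeasurableSet (S '' (⇑Dlin '' K')) := by
    rw [hSDK]
    exact hfKmeas.preimage hA_meas
  have hvolS : volume (S '' (⇑Dlin '' K')) = volume (⇑Dlin '' K') := by
    have h1 := hSmp.measure_preimage hSDKmeas.nullMeasurableSet
    rw [Set.preimage_image_eq _ hSinj] at h1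
    exact h1.symm
  have hP0 : 0 ≤ ∏ k ∈ Finset.range n, lam (k + 1) :=
    Finset.prod_nonneg fun k hk => (hpos k (Finset.mem_range.mp hk)).le
  have hdetD : LinearMap.det Dlin = ∏ k ∈ Finset.range n, lam (k + 1) := by
    rw [hDlindef, LinearMap.det_toLin', Matrix.det_diagonal]
    exact Fin.prod_univ_eq_prod_range (fun k => lam (k + 1)) n
  have hvolD : volume (⇑Dlin '' K')
      = ENNReal.ofReal (∏ k ∈ Finset.range n, lam (k + 1)) * volume K' := by
    rw [Measure.addHaar_image_linearMap (μ := volume) Dlin K', hdetD, abs_of_nonneg hP0]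
  have hvolK : volume K
      = ENNReal.ofReal |LinearMap.det (A : (Fin n → ℝ) →ₗ[ℝ] (Fin n → ℝ))| * volume K' := by
    conv_lhs => rw [← hKK']
    rw [← LinearEquiv.coe_coe, Measure.addHaar_image_linearMap (μ := volume) _ K']
  have hvolfK : volume (f '' K)
      = ENNReal.ofReal |LinearMap.det (A : (Fin n → ℝ) →ₗ[ℝ] (Fin n → ℝ))|
        * (ENNReal.ofReal (∏ k ∈ Finset.range n, lam (k + 1)) * volume K') := by
    rw [hfK, ← LinearEquiv.coe_coe, Measure.addHaar_image_linearMap (μ := volume), hvolS, hvolD]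
  rw [hvolfK, hvolK]
  rw [ENNReal.toReal_mul, ENNReal.toReal_mul, ENNReal.toReal_mul]
  rw [ENNReal.toReal_ofReal (abs_nonneg _), ENNReal.toReal_ofReal hP0]
  ring
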